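/- Let q ≥ 2 be a real number and τ > 0. For real numbers a, b, write a_τ = min{a, τ} and b_τ = min{b, τ}. Then (4(q−1)/q²) · ( a|a_τ|^{q/2−1} − b|b_τ|^{q/2−1} )² ≤ (a − b) · ( a|a_τ|^{q−2} − b|b_τ|^{q−2} ). -/

import Mathlib

open Real Set Filter Topology

lemma oneVar (p : ℝ) (hp : 1 ≤ p) : ∀ t : ℝ, 0 ≤ t → t ≤ 1 →
    (1 - t ^ p) ^ 2 ≤ p ^ 2 / (2 * p - 1) * ((1 - t) * (1 - t ^ (2 * p - 1))) := by
  have hp0 : 0 < p := by linarith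
  have h2p : (0:ℝ) < 2 * p - 1 := by linarith
  set c : ℝ := p ^ 2 / (2 * p - 1) with hc
  have hc0 : 0 < c := by positivity
  have hcp : c * (2 * p - 1) = p ^ 2 := div_mul_cancel₀ _ h2p.ne'
  -- the auxiliary function
  set ψ : ℝ → ℝ := fun t => c * (1 - t ^ (2 * p - 1)) - (1 - t ^ p) ^ 2 / (1 - t) with hψ
  -- continuity on Ico 0 1
  have hcont : ContinuousOn ψ (Ico 0 1) := by
    apply ContinuousOn.sub
    · apply ContinuousOn.mul continuousOn_const
      apply ContinuousOn.sub continuousOn_const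
      intro x hx
      exact (Real.continuousAt_rpow_const x _ (Or.inr (by linarith))).continuousWithinAt
    · apply ContinuousOn.div
      · apply ContinuousOn.pow
        apply ContinuousOn.sub continuousOn_const
        intro x hx
        exact (Real.continuousAt_rpow_const x _ (Or.inr (by linarith))).continuousWithinAt
      · exact (continuousOn_const.sub continuousOn_id)
      · intro x hx
        have : x < 1 := hx.2
        intro h
        have : (1:ℝ) - x > 0 := by linarith
        linarith [h ▸ this]
  -- derivative on Ioo 0 1
  have hderiv : ∀ x ∈ Ioo (0:ℝ) 1, HasDerivAt ψ
      (c * (0 - (2 * p - 1) * x ^ (2 * p - 1 - 1)) -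
        ((2 * (1 - x ^ p) ^ 1 * (0 - p * x ^ (p - 1))) * (1 - x) - (1 - x ^ p) ^ 2 * (0 - 1)) / (1 - x) ^ 2) x := by
    intro x hx
    have hx0 : x ≠ 0 := ne_of_gt hx.1
    have hden : (1:ℝ) - x ≠ 0 := by have := hx.2; intro h; linarith
    have h1 : HasDerivAt (fun t : ℝ => t ^ (2 * p - 1)) ((2 * p - 1) * x ^ (2 * p - 1 - 1)) x :=
      Real.hasDerivAt_rpow_const (Or.inl hx0)
    have h2 : HasDerivAt (fun t : ℝ => t ^ p) (p * x ^ (p - 1)) x :=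
      Real.hasDerivAt_rpow_const (Or.inl hx0)
    have h3 : HasDerivAt (fun t : ℝ => (1 - t ^ p) ^ 2)
        (2 * (1 - x ^ p) ^ 1 * (0 - p * x ^ (p - 1))) x := by
      have := (hasDerivAt_pow 2 (1 - x ^ p)).comp x ((hasDerivAt_const x (1:ℝ)).sub h2)
      simpa [Function.comp_def] using this
    have h4 : HasDerivAt (fun t : ℝ => 1 - t) (0 - 1) x := (hasDerivAt_const x (1:ℝ)).sub (hasDerivAt_id x)
    have hdiv := h3.div h4 hden
    exact (((hasDerivAt_const x (1:ℝ)).sub h1).const_mul c).sub hdiv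
  -- derivative is nonpositive
  have hdnp : ∀ x ∈ Ioo (0:ℝ) 1, deriv ψ x ≤ 0 := by
    intro x hx
    rw [(hderiv x hx).deriv]
    have hx0 : 0 < x := hx.1
    have h1x : (0:ℝ) < 1 - x := by have := hx.2; linarith
    set A := x ^ p with hA
    set B := x ^ (p - 1) with hB
    have hB2 : x ^ (2 * p - 1 - 1) = B * B := by
      rw [hB, ← Real.rpow_add hx0]; ring_nf
    rw [hB2, sub_nonpos, le_div_iff₀ (by positivity : (0:ℝ) < (1 - x) ^ 2)]
    have hcpB : c * (2 * p - 1) * (B * B) * (1 - x) ^ 2 = p ^ 2 * (B * B) * (1 - x) ^ 2 := by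
      rw [hcp]
    nlinarith [sq_nonneg ((1 - A) - p * B * (1 - x)), hcpB]
  have hanti : AntitoneOn ψ (Ico 0 1) := by
    apply antitoneOn_of_deriv_nonpos (convex_Ico 0 1) hcont
    · rw [interior_Ico]
      intro x hx
      exact ((hderiv x hx).differentiableAt).differentiableWithinAt
    · intro x hx
      rw [interior_Ico] at hx
      exact hdnp x hx
  have hslope : Tendsto (fun t : ℝ => (t ^ p - 1) / (t - 1)) (𝓝[≠] (1:ℝ)) (𝓝 p) := by
    have h := (Real.hasDerivAt_rpow_const (x := (1:ℝ)) (p := p) (Or.inl one_ne_zero))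
    have h2 := hasDerivAt_iff_tendsto_slope.mp h
    rw [slope_fun_def_field] at h2
    simpa [Real.one_rpow] using h2
  have hlim : Tendsto ψ (𝓝[<] (1:ℝ)) (𝓝 0) := by
    have h1 : Tendsto (fun t : ℝ => t ^ (2 * p - 1)) (𝓝[<] (1:ℝ)) (𝓝 ((1:ℝ) ^ (2 * p - 1))) :=
      ((Real.continuousAt_rpow_const 1 _ (Or.inl one_ne_zero)).tendsto).mono_left nhdsWithin_le_nhds
    have h2 : Tendsto (fun t : ℝ => (t ^ p - 1) / (t - 1)) (𝓝[<] (1:ℝ)) (𝓝 p) :=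
      hslope.mono_left (nhdsWithin_mono _ fun x hx => ne_of_lt hx)
    have h3 : Tendsto (fun t : ℝ => (1:ℝ) - t) (𝓝[<] (1:ℝ)) (𝓝 (1 - 1)) :=
      (tendsto_const_nhds.sub tendsto_id).mono_left nhdsWithin_le_nhds
    have h4 : Tendsto (fun t : ℝ => c * (1 - t ^ (2 * p - 1)) - ((t ^ p - 1) / (t - 1)) ^ 2 * (1 - t))
        (𝓝[<] (1:ℝ)) (𝓝 (c * (1 - (1:ℝ) ^ (2 * p - 1)) - p ^ 2 * (1 - 1))) :=
      (tendsto_const_nhds.mul (tendsto_const_nhds.sub h1)).sub ((h2.pow 2).mul h3)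
    have hval : c * (1 - (1:ℝ) ^ (2 * p - 1)) - p ^ 2 * (1 - 1) = 0 := by
      simp [Real.one_rpow]
    rw [hval] at h4
    apply h4.congr'
    filter_upwards [self_mem_nhdsWithin] with t ht
    have ht1 : t - 1 ≠ 0 := by
      have : t < 1 := ht
      intro h; linarith [sub_eq_zero.mp h]
    have h1t' : (1:ℝ) - t ≠ 0 := by
      have : t < 1 := ht
      intro h; linarith [sub_eq_zero.mp h]
    show c * (1 - t ^ (2 * p - 1)) - ((t ^ p - 1) / (t - 1)) ^ 2 * (1 - t) = ψ t
    rw [hψ]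
    field_simp [ht1, h1t']
    ring
  intro t ht0 ht1
  rcases eq_or_lt_of_le ht1 with h1 | h1
  · simp [h1, Real.one_rpow]
  have h1t : (0:ℝ) < 1 - t := by linarith
  have hψt : 0 ≤ ψ t := by
    apply le_of_tendsto hlim
    filter_upwards [Ioo_mem_nhdsLT_of_mem (⟨h1, le_refl 1⟩ : (1:ℝ) ∈ Ioc t 1)] with s hs
    exact hanti ⟨ht0, h1⟩ ⟨le_trans ht0 hs.1.le, hs.2⟩ hs.1.le
  have h5 : (1 - t ^ p) ^ 2 / (1 - t) ≤ c * (1 - t ^ (2 * p - 1)) := by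
    have := hψt
    rw [hψ] at this
    linarith
  rw [div_le_iff₀ h1t] at h5
  calc (1 - t ^ p) ^ 2 ≤ c * (1 - t ^ (2 * p - 1)) * (1 - t) := h5
    _ = c * ((1 - t) * (1 - t ^ (2 * p - 1))) := by ring
lemma powIneq (p : ℝ) (hp : 1 ≤ p) : ∀ x y : ℝ, 0 ≤ y → y ≤ x →
    (x ^ p - y ^ p) ^ 2 ≤ p ^ 2 / (2 * p - 1) * ((x - y) * (x ^ (2 * p - 1) - y ^ (2 * p - 1))) := by
  intro x y hy hxy
  have hp0 : 0 < p := by linarith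
  have h2p : (0:ℝ) < 2 * p - 1 := by linarith
  rcases eq_or_lt_of_le (hy.trans hxy) with h | hx0
  · have hy0 : y = 0 := le_antisymm (h ▸ hxy) hy
    rw [hy0, ← h]
    simp [Real.zero_rpow hp0.ne', Real.zero_rpow h2p.ne']
  · set t := y / x with htdef
    have ht0 : 0 ≤ t := div_nonneg hy hx0.le
    have ht1 : t ≤ 1 := div_le_one_of_le₀ hxy hx0.le
    have hyx : y = x * t := by rw [htdef]; field_simp
    have hq := oneVar p hp t ht0 ht1
    have hxp : (0:ℝ) ≤ x ^ p := Real.rpow_nonneg hx0.le p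
    have e1 : y ^ p = x ^ p * t ^ p := by rw [hyx, Real.mul_rpow hx0.le ht0]
    have e2 : y ^ (2 * p - 1) = x ^ (2 * p - 1) * t ^ (2 * p - 1) := by
      rw [hyx, Real.mul_rpow hx0.le ht0]
    have e3 : x ^ p * x ^ p = x * x ^ (2 * p - 1) := by
      have h' : x * x ^ (2 * p - 1) = x ^ (1:ℝ) * x ^ (2 * p - 1) := by rw [Real.rpow_one]
      rw [h', ← Real.rpow_add hx0, ← Real.rpow_add hx0]
      ring_nf
    have e4 : x - y = x * (1 - t) := by rw [hyx]; ring
    have h5 := mul_le_mul_of_nonneg_left hq (mul_nonneg hxp hxp)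
    calc (x ^ p - y ^ p) ^ 2 = x ^ p * x ^ p * (1 - t ^ p) ^ 2 := by rw [e1]; ring
      _ ≤ x ^ p * x ^ p * (p ^ 2 / (2 * p - 1) * ((1 - t) * (1 - t ^ (2 * p - 1)))) := h5
      _ = p ^ 2 / (2 * p - 1) * ((x - y) * (x ^ (2 * p - 1) - y ^ (2 * p - 1))) := by
          rw [e4, e2, e3]; ring

lemma glue (C u v s₁ s₂ t₁ t₂ : ℝ) (hC : 0 ≤ C) (hu : 0 ≤ u) (hv : 0 ≤ v)
    (hs₁ : 0 ≤ s₁) (hs₂ : 0 ≤ s₂) (ht₁ : 0 ≤ t₁) (ht₂ : 0 ≤ t₂)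
    (h1 : u ^ 2 ≤ C * (s₁ * t₁)) (h2 : v ^ 2 ≤ C * (s₂ * t₂)) :
    (u + v) ^ 2 ≤ C * ((s₁ + s₂) * (t₁ + t₂)) := by
  have h3 : (u * v) ^ 2 ≤ (C * (s₁ * t₁)) * (C * (s₂ * t₂)) := by
    calc (u * v) ^ 2 = u ^ 2 * v ^ 2 := by ring
      _ ≤ (C * (s₁ * t₁)) * (C * (s₂ * t₂)) :=
        mul_le_mul h1 h2 (sq_nonneg v) (by positivity)
  have h4 : 2 * (u * v) ≤ C * (s₁ * t₂) + C * (s₂ * t₁) := by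
    have hX : 0 ≤ C * (s₁ * t₂) := by positivity
    have hY : 0 ≤ C * (s₂ * t₁) := by positivity
    have huv : 0 ≤ u * v := mul_nonneg hu hv
    nlinarith [h3, sq_nonneg (C * (s₁ * t₂) - C * (s₂ * t₁)), huv, hX, hY,
      mul_nonneg huv (add_nonneg hX hY)]
  nlinarith [h1, h2, h4]



lemma repA (p : ℝ) (hp0 : 0 < p) {x : ℝ} (hx : 0 ≤ x) : x * |x| ^ (p - 1) = x ^ p := by
  rw [abs_of_nonneg hx]
  rcases hx.eq_or_lt with h | h
  · rw [← h, Real.zero_rpow hp0.ne']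
    ring
  · nth_rewrite 1 [← Real.rpow_one x]
    rw [← Real.rpow_add h]
    ring_nf

lemma repB (p : ℝ) (hp : 1 ≤ p) {x : ℝ} (hx : 0 ≤ x) :
    x * |x| ^ (2 * p - 2) = x ^ (2 * p - 1) := by
  have h : (2 * p - 2 : ℝ) = (2 * p - 1) - 1 := by ring
  rw [h]
  exact repA (2 * p - 1) (by linarith) hx

lemma repA' (p : ℝ) (hp0 : 0 < p) {x : ℝ} (hx : x ≤ 0) :
    x * |x| ^ (p - 1) = -((-x) ^ p) := by
  have h : x * |x| ^ (p - 1) = -((-x) * |(-x)| ^ (p - 1)) := by rw [abs_neg]; ring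
  rw [h, repA p hp0 (neg_nonneg.mpr hx)]

lemma repB' (p : ℝ) (hp : 1 ≤ p) {x : ℝ} (hx : x ≤ 0) :
    x * |x| ^ (2 * p - 2) = -((-x) ^ (2 * p - 1)) := by
  have h : (2 * p - 2 : ℝ) = (2 * p - 1) - 1 := by ring
  rw [h]
  exact repA' (2 * p - 1) (by linarith) hx

lemma bnd (r τ y : ℝ) (hr : 0 ≤ r) (hτ : 0 < τ) (hy : y ≤ τ) :
    y * |y| ^ r ≤ τ * τ ^ r := by
  rcases le_or_gt y 0 with h | h
  · have h1 : y * |y| ^ r ≤ 0 :=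
      mul_nonpos_iff.mpr (Or.inr ⟨h, Real.rpow_nonneg (abs_nonneg y) r⟩)
    have h2 : (0:ℝ) ≤ τ * τ ^ r := by positivity
    linarith
  · rw [abs_of_pos h]
    exact mul_le_mul hy (Real.rpow_le_rpow h.le hy hr) (by positivity) hτ.le

lemma caseLe (p τ : ℝ) (hp : 1 ≤ p) (hτ : 0 < τ) : ∀ x y : ℝ, y ≤ x → x ≤ τ →
    (x * |x| ^ (p - 1) - y * |y| ^ (p - 1)) ^ 2 ≤
      p ^ 2 / (2 * p - 1) * ((x - y) * (x * |x| ^ (2 * p - 2) - y * |y| ^ (2 * p - 2))) := by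
  intro x y hxy hxτ
  have hp0 : 0 < p := by linarith
  have hC : (0:ℝ) ≤ p ^ 2 / (2 * p - 1) := by
    apply div_nonneg (sq_nonneg p); linarith
  rcases le_or_gt 0 y with hy | hy
  · rw [repA p hp0 hy, repA p hp0 (hy.trans hxy), repB p hp hy, repB p hp (hy.trans hxy)]
    exact powIneq p hp x y hy hxy
  · rcases le_or_gt x 0 with hx | hx
    · rw [repA' p hp0 hy.le, repA' p hp0 hx, repB' p hp hy.le, repB' p hp hx]
      have h := powIneq p hp (-y) (-x) (by linarith) (by linarith)
      calc (-((-x) ^ p) - -((-y) ^ p)) ^ 2 = ((-y) ^ p - (-x) ^ p) ^ 2 := by ring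
        _ ≤ p ^ 2 / (2 * p - 1) * ((-y - -x) * ((-y) ^ (2 * p - 1) - (-x) ^ (2 * p - 1))) := h
        _ = p ^ 2 / (2 * p - 1) * ((x - y) * (-((-x) ^ (2 * p - 1)) - -((-y) ^ (2 * p - 1)))) := by
            ring
    · rw [repA' p hp0 hy.le, repA p hp0 hx.le, repB' p hp hy.le, repB p hp hx.le]
      have h1 := powIneq p hp x 0 le_rfl hx.le
      have h2 := powIneq p hp (-y) 0 le_rfl (by linarith)
      rw [Real.zero_rpow hp0.ne', Real.zero_rpow (by intro h; linarith : (2*p-1:ℝ) ≠ 0)] at h1 h2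
      have h1' : (x ^ p) ^ 2 ≤ p ^ 2 / (2 * p - 1) * (x * x ^ (2 * p - 1)) := by
        calc (x ^ p) ^ 2 = (x ^ p - 0) ^ 2 := by ring
          _ ≤ p ^ 2 / (2 * p - 1) * ((x - 0) * (x ^ (2 * p - 1) - 0)) := h1
          _ = p ^ 2 / (2 * p - 1) * (x * x ^ (2 * p - 1)) := by ring
      have h2' : ((-y) ^ p) ^ 2 ≤ p ^ 2 / (2 * p - 1) * ((-y) * (-y) ^ (2 * p - 1)) := by
        calc ((-y) ^ p) ^ 2 = ((-y) ^ p - 0) ^ 2 := by ring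
          _ ≤ p ^ 2 / (2 * p - 1) * ((-y - 0) * ((-y) ^ (2 * p - 1) - 0)) := h2
          _ = p ^ 2 / (2 * p - 1) * ((-y) * (-y) ^ (2 * p - 1)) := by ring
      have hg := glue (p ^ 2 / (2 * p - 1)) (x ^ p) ((-y) ^ p) x (-y)
        (x ^ (2 * p - 1)) ((-y) ^ (2 * p - 1)) hC
        (Real.rpow_nonneg hx.le p) (Real.rpow_nonneg (by linarith) p) hx.le (by linarith)
        (Real.rpow_nonneg hx.le _) (Real.rpow_nonneg (by linarith) _) h1' h2'
      calc (x ^ p - -((-y) ^ p)) ^ 2 = (x ^ p + (-y) ^ p) ^ 2 := by ring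
        _ ≤ p ^ 2 / (2 * p - 1) * ((x + -y) * (x ^ (2 * p - 1) + (-y) ^ (2 * p - 1))) := hg
        _ = p ^ 2 / (2 * p - 1) * ((x - y) * (x ^ (2 * p - 1) - -((-y) ^ (2 * p - 1)))) := by ring




lemma keyP (p τ : ℝ) (hp : 1 ≤ p) (hτ : 0 < τ) : ∀ x y : ℝ, y ≤ x →
    (x * |min x τ| ^ (p - 1) - y * |min y τ| ^ (p - 1)) ^ 2 ≤
      p ^ 2 / (2 * p - 1) *
        ((x - y) * (x * |min x τ| ^ (2 * p - 2) - y * |min y τ| ^ (2 * p - 2))) := by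
  intro x y hxy
  have hp0 : 0 < p := by linarith
  have h2p : (0:ℝ) < 2 * p - 1 := by linarith
  have hC0 : (0:ℝ) ≤ p ^ 2 / (2 * p - 1) := by positivity
  have h1C : (1:ℝ) ≤ p ^ 2 / (2 * p - 1) := by
    rw [le_div_iff₀ h2p]
    nlinarith [sq_nonneg (p - 1)]
  have hT : τ ^ (p - 1) * τ ^ (p - 1) = τ ^ (2 * p - 2) := by
    rw [← Real.rpow_add hτ]; ring_nf
  rcases le_or_gt x τ with hx | hx
  · rw [min_eq_left hx, min_eq_left (hxy.trans hx)]
    exact caseLe p τ hp hτ x y hxy hx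
  · rw [min_eq_right hx.le, abs_of_pos hτ]
    rcases le_or_gt τ y with hy | hy
    · rw [min_eq_right hy, abs_of_pos hτ]
      have h6 : (x - y) ^ 2 * τ ^ (2 * p - 2) ≤
          p ^ 2 / (2 * p - 1) * ((x - y) ^ 2 * τ ^ (2 * p - 2)) :=
        le_mul_of_one_le_left (by positivity) h1C
      calc (x * τ ^ (p - 1) - y * τ ^ (p - 1)) ^ 2
          = (x - y) ^ 2 * (τ ^ (p - 1) * τ ^ (p - 1)) := by ring
        _ = (x - y) ^ 2 * τ ^ (2 * p - 2) := by rw [hT]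
        _ ≤ p ^ 2 / (2 * p - 1) * ((x - y) ^ 2 * τ ^ (2 * p - 2)) := h6
        _ = p ^ 2 / (2 * p - 1) * ((x - y) * (x * τ ^ (2 * p - 2) - y * τ ^ (2 * p - 2))) := by
            ring
    · -- y < τ < x : glue at τ
      rw [min_eq_left hy.le]
      set C := p ^ 2 / (2 * p - 1) with hCdef
      have hv0 : 0 ≤ τ * |τ| ^ (p - 1) - y * |y| ^ (p - 1) := by
        have := bnd (p - 1) τ y (by linarith) hτ hy.le
        rw [abs_of_pos hτ]; linarith
      have ht2 : 0 ≤ τ * |τ| ^ (2 * p - 2) - y * |y| ^ (2 * p - 2) := by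
        have := bnd (2 * p - 2) τ y (by linarith) hτ hy.le
        rw [abs_of_pos hτ]; linarith
      have h1 : ((x - τ) * τ ^ (p - 1)) ^ 2 ≤ C * ((x - τ) * ((x - τ) * τ ^ (2 * p - 2))) := by
        have h6 : (x - τ) ^ 2 * τ ^ (2 * p - 2) ≤ C * ((x - τ) ^ 2 * τ ^ (2 * p - 2)) :=
          le_mul_of_one_le_left (by positivity) h1C
        calc ((x - τ) * τ ^ (p - 1)) ^ 2 = (x - τ) ^ 2 * (τ ^ (p - 1) * τ ^ (p - 1)) := by ring
          _ = (x - τ) ^ 2 * τ ^ (2 * p - 2) := by rw [hT]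
          _ ≤ C * ((x - τ) ^ 2 * τ ^ (2 * p - 2)) := h6
          _ = C * ((x - τ) * ((x - τ) * τ ^ (2 * p - 2))) := by ring
      have h2 : (τ * |τ| ^ (p - 1) - y * |y| ^ (p - 1)) ^ 2 ≤
          C * ((τ - y) * (τ * |τ| ^ (2 * p - 2) - y * |y| ^ (2 * p - 2))) := by
        have := caseLe p τ hp hτ τ y hy.le le_rfl
        calc (τ * |τ| ^ (p - 1) - y * |y| ^ (p - 1)) ^ 2 ≤
            C * ((τ - y) * (τ * |τ| ^ (2 * p - 2) - y * |y| ^ (2 * p - 2))) := this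
          _ = C * ((τ - y) * (τ * |τ| ^ (2 * p - 2) - y * |y| ^ (2 * p - 2))) := rfl
      have hg := glue C ((x - τ) * τ ^ (p - 1)) (τ * |τ| ^ (p - 1) - y * |y| ^ (p - 1))
        (x - τ) (τ - y) ((x - τ) * τ ^ (2 * p - 2))
        (τ * |τ| ^ (2 * p - 2) - y * |y| ^ (2 * p - 2)) hC0
        (mul_nonneg (by linarith) (Real.rpow_nonneg hτ.le _)) hv0 (by linarith) (by linarith)
        (mul_nonneg (by linarith) (Real.rpow_nonneg hτ.le _)) ht2 h1 h2
      have e1 : (x - τ) * τ ^ (p - 1) + (τ * |τ| ^ (p - 1) - y * |y| ^ (p - 1)) =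
          x * τ ^ (p - 1) - y * |y| ^ (p - 1) := by
        rw [abs_of_pos hτ]; ring
      have e2 : (x - τ) * τ ^ (2 * p - 2) + (τ * |τ| ^ (2 * p - 2) - y * |y| ^ (2 * p - 2)) =
          x * τ ^ (2 * p - 2) - y * |y| ^ (2 * p - 2) := by
        rw [abs_of_pos hτ]; ring
      have e3 : (x - τ) + (τ - y) = x - y := by ring
      rw [e1, e2, e3] at hg
      exact hg
/-- The elementary inequality behind Moser iteration with truncations. -/
theorem statement4 (q τ a b : ℝ) (hq : 2 ≤ q) (hτ : 0 < τ) :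
    4 * (q - 1) / q ^ 2 *
        (a * |min a τ| ^ (q / 2 - 1) - b * |min b τ| ^ (q / 2 - 1)) ^ 2 ≤
      (a - b) * (a * |min a τ| ^ (q - 2) - b * |min b τ| ^ (q - 2)) := by
  have hp : (1:ℝ) ≤ q / 2 := by linarith
  have hq1 : (0:ℝ) < q - 1 := by linarith
  have hq0 : (0:ℝ) < q := by linarith
  have he : q - 2 = 2 * (q / 2) - 2 := by ring
  have he' : q / 2 - 1 = (q / 2) - 1 := rfl
  have hcc : (q / 2) ^ 2 / (2 * (q / 2) - 1) = q ^ 2 / (4 * (q - 1)) := by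
    rw [div_eq_div_iff (by linarith) (by linarith)]
    ring
  rw [he]
  rcases le_total b a with h | h
  · have key := keyP (q / 2) τ hp hτ a b h
    rw [hcc, div_mul_eq_mul_div, le_div_iff₀ (by linarith : (0:ℝ) < 4 * (q - 1))] at key
    rw [div_mul_eq_mul_div, div_le_iff₀ (by positivity : (0:ℝ) < q ^ 2)]
    linarith [key]
  · have key := keyP (q / 2) τ hp hτ b a h
    rw [hcc, div_mul_eq_mul_div, le_div_iff₀ (by linarith : (0:ℝ) < 4 * (q - 1))] at key
    rw [div_mul_eq_mul_div, div_le_iff₀ (by positivity : (0:ℝ) < q ^ 2)]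
    linarith [key]
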